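/- Let q be a unital quantum channel on M_n. Suppose there exist m ≥ 1 and a star-algebra automorphism α of Matrix (Fin n × Fin m) (Fin n × Fin m) ℂ (a ℂ-algebra automorphism with α(Xᴴ) = α(X)ᴴ) such that for every integer k ≥ 1 and every A ∈ M_n, q^{(k)}(A) = ptr_m(α^{(k)}(A ⊗ I_m)), where q^{(k)} and α^{(k)} denote k-fold composition. Then q is a *-automorphism of M_n: q is bijective and q(A * B) = q(A) * q(B) for all A, B. In other words, a unital quantum channel that is not a *-automorphism admits no *-automorphic power dilation acting on a finite matrix algebra. -/

import Mathlib

open Matrix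
open scoped Kronecker ComplexConjugate

set_option linter.unusedSectionVars false
set_option maxHeartbeats 1000000

namespace NoPowerAux


lemma star_mul_self_re (z : ℂ) : (star z * z).re = ‖z‖ ^ 2 := by
  have : star z * z = (Complex.normSq z : ℂ) := by
    rw [Complex.star_def, Complex.normSq_eq_conj_mul_self]
  rw [this, Complex.ofReal_re, ← Complex.sq_norm]

noncomputable def TM {ι : Type*} [Fintype ι] (M : Matrix ι ι ℂ) : EuclideanSpace ℂ (ι × ι) :=
  (WithLp.equiv 2 _).symm (fun p => M p.1 p.2)

variable {ι : Type*} [Fintype ι]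

lemma TM_apply (M : Matrix ι ι ℂ) (p : ι × ι) : TM M p = M p.1 p.2 := rfl

lemma TM_sub (X Y : Matrix ι ι ℂ) : TM (X - Y) = TM X - TM Y := rfl

lemma TM_norm_sq (M : Matrix ι ι ℂ) :
    ‖TM M‖ ^ 2 = ∑ p : ι × ι, ‖M p.1 p.2‖ ^ 2 := by
  rw [PiLp.norm_sq_eq_of_L2]; rfl

lemma TM_inner (X Y : Matrix ι ι ℂ) :
    (inner ℂ (TM X) (TM Y) : ℂ) = ∑ p : ι × ι, conj (X p.1 p.2) * Y p.1 p.2 := by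
  rw [PiLp.inner_apply]; simp only [RCLike.inner_apply']; rfl

lemma TM_inj {X Y : Matrix ι ι ℂ} (h : TM X = TM Y) : X = Y := by
  ext a b
  exact congrArg (fun v => v (a, b)) h

lemma TM_norm_sq_trace (M : Matrix ι ι ℂ) :
    ‖TM M‖ ^ 2 = (Matrix.trace (Mᴴ * M)).re := by
  rw [TM_norm_sq, Matrix.trace]
  simp only [Matrix.diag_apply, Matrix.mul_apply, Matrix.conjTranspose_apply, Complex.re_sum,
    star_mul_self_re]
  rw [Fintype.sum_prod_type, Finset.sum_comm]


lemma TM_zero {ι : Type*} [Fintype ι] : TM (0 : Matrix ι ι ℂ) = 0 := rfl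

variable {ι : Type*} [Fintype ι] [DecidableEq ι]

omit [DecidableEq ι] in
lemma stdBasis_repr (M : Matrix ι ι ℂ) (i j : ι) :
    (Matrix.stdBasis ℂ ι ι).repr M (i, j) = M i j := by
  simp [Matrix.stdBasis, Pi.basis_repr]

lemma trace_mulLeft (A : Matrix ι ι ℂ) :
    LinearMap.trace ℂ (Matrix ι ι ℂ) (LinearMap.mulLeft ℂ A)
      = (Fintype.card ι : ℂ) * A.trace := by
  rw [LinearMap.trace_eq_matrix_trace ℂ (Matrix.stdBasis ℂ ι ι)]
  have h : ∀ p : ι × ι,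
      (LinearMap.toMatrix (Matrix.stdBasis ℂ ι ι) (Matrix.stdBasis ℂ ι ι)
        (LinearMap.mulLeft ℂ A)) p p = A p.1 p.1 := by
    rintro ⟨i, j⟩
    rw [LinearMap.toMatrix_apply, LinearMap.mulLeft_apply, Matrix.stdBasis_eq_single,
      stdBasis_repr]
    simp [Matrix.mul_apply, Matrix.single]
  rw [Matrix.trace]
  simp only [Matrix.diag_apply, h]
  rw [Fintype.sum_prod_type, Matrix.trace, Finset.mul_sum]
  simp [Finset.sum_const, mul_comm]

lemma trace_algEquiv (α : Matrix ι ι ℂ ≃ₐ[ℂ] Matrix ι ι ℂ) [Nonempty ι] (A : Matrix ι ι ℂ) :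
    Matrix.trace (α A) = Matrix.trace A := by
  have hcard : (Fintype.card ι : ℂ) ≠ 0 := by
    exact_mod_cast Fintype.card_pos.ne'
  have key : LinearMap.mulLeft ℂ (α A)
      = α.toLinearEquiv.conj (LinearMap.mulLeft ℂ A) := by
    ext X
    simp [LinearEquiv.conj_apply, AlgEquiv.toLinearEquiv_apply, _root_.map_mul]
  have := congrArg (LinearMap.trace ℂ (Matrix ι ι ℂ)) key
  rw [LinearMap.trace_conj', trace_mulLeft, trace_mulLeft] at this
  exact mul_left_cancel₀ hcard this

variable {n m : ℕ} [NeZero n] [NeZero m]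

noncomputable def emb (m : ℕ) (A : Matrix (Fin n) (Fin n) ℂ) :
    Matrix (Fin n × Fin m) (Fin n × Fin m) ℂ := A ⊗ₖ (1 : Matrix (Fin m) (Fin m) ℂ)

noncomputable def ptr (Y : Matrix (Fin n × Fin m) (Fin n × Fin m) ℂ) :
    Matrix (Fin n) (Fin n) ℂ :=
  Matrix.of fun a b => (1 / (m : ℂ)) * ∑ j : Fin m, Y (a, j) (b, j)

lemma hm0 : (m : ℂ) ≠ 0 := Nat.cast_ne_zero.mpr (NeZero.ne m)

lemma emb_apply (A : Matrix (Fin n) (Fin n) ℂ) (a b : Fin n) (j j' : Fin m) :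
    emb m A (a, j) (b, j') = if j = j' then A a b else 0 := by
  simp [emb, Matrix.one_apply, mul_ite]

lemma ptr_emb (A : Matrix (Fin n) (Fin n) ℂ) : ptr (emb m A) = A := by
  ext a b
  simp only [ptr, Matrix.of_apply, emb_apply]
  rw [Finset.sum_const, Finset.card_univ, Fintype.card_fin]
  simp only [if_true, nsmul_eq_mul]
  field_simp
  rw [mul_comm, mul_div_assoc, div_self hm0, mul_one]

lemma ptr_sub (X Y : Matrix (Fin n × Fin m) (Fin n × Fin m) ℂ) :
    ptr (X - Y) = ptr X - ptr Y := by
  ext a b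
  simp [ptr, Finset.sum_sub_distrib, mul_sub]

lemma emb_norm_sq (A : Matrix (Fin n) (Fin n) ℂ) :
    ‖TM (emb m A)‖ ^ 2 = m * ‖TM A‖ ^ 2 := by
  simp only [TM_norm_sq, Fintype.sum_prod_type, emb_apply, apply_ite (fun z : ℂ => ‖z‖ ^ 2),
    norm_zero, zero_pow two_ne_zero, Finset.sum_ite_eq, Finset.mem_univ, if_true]
  simp [Finset.sum_const, Finset.card_univ, nsmul_eq_mul, Finset.mul_sum]

lemma emb_adj (B : Matrix (Fin n) (Fin n) ℂ) (Y : Matrix (Fin n × Fin m) (Fin n × Fin m) ℂ) :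
    (inner ℂ (TM (emb m B)) (TM Y) : ℂ) = (m : ℂ) * inner ℂ (TM B) (TM (ptr Y)) := by
  simp only [TM_inner, Fintype.sum_prod_type, emb_apply, apply_ite (starRingEnd ℂ), map_zero,
    ite_mul, zero_mul, Finset.sum_ite_eq, Finset.mem_univ, if_true, ptr, Matrix.of_apply,
    Finset.mul_sum]
  refine Finset.sum_congr rfl fun a _ => ?_
  rw [Finset.sum_comm]
  refine Finset.sum_congr rfl fun b _ => ?_
  rw [← Finset.mul_sum]
  have hm : (m : ℂ) ≠ 0 := hm0
  field_simp
  rw [Finset.mul_sum]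



lemma norm_eq_of_sq_eq {a b : ℝ} (h : a ^ 2 = b ^ 2) (ha : 0 ≤ a) (hb : 0 ≤ b) : a = b := by
  nlinarith

lemma le_of_sq_le_sq {a b : ℝ} (h : a ^ 2 ≤ b ^ 2) (ha : 0 ≤ a) (hb : 0 ≤ b) : a ≤ b := by
  nlinarith

lemma pyth (Y : Matrix (Fin n × Fin m) (Fin n × Fin m) ℂ) :
    ‖TM Y‖ ^ 2 = m * ‖TM (ptr Y)‖ ^ 2 + ‖TM Y - TM (emb m (ptr Y))‖ ^ 2 := by
  have horth : (inner ℂ (TM (emb m (ptr Y))) (TM Y - TM (emb m (ptr Y))) : ℂ) = 0 := by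
    rw [inner_sub_right, emb_adj, emb_adj, ptr_emb, sub_self]
  have h1 := norm_add_sq_eq_norm_sq_add_norm_sq_of_inner_eq_zero _ _ horth
  have h2 : TM (emb m (ptr Y)) + (TM Y - TM (emb m (ptr Y))) = TM Y := by abel
  rw [h2] at h1
  have h3 : ‖TM Y‖ ^ 2 = ‖TM (emb m (ptr Y))‖ ^ 2 + ‖TM Y - TM (emb m (ptr Y))‖ ^ 2 := by
    rw [pow_two, pow_two, pow_two, h1]
  rw [h3, emb_norm_sq]


end NoPowerAux

open NoPowerAux in
/-- Corollary `nopower`: if a unital quantum channel `q` on `Mₙ` admits a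
`*`-automorphic power dilation acting on a finite matrix algebra `Mₙ ⊗ M_m` — i.e. there is
a star-algebra automorphism `α` with `q^{(k)}(A) = ptr_m(α^{(k)}(A ⊗ I))` for all `k ≥ 1` —
then `q` is itself a `*`-automorphism of `Mₙ`. -/
theorem no_power_dilation_on_matrix_algebra
    (n m p : ℕ) [NeZero n] [NeZero m]
    (q : Matrix (Fin n) (Fin n) ℂ → Matrix (Fin n) (Fin n) ℂ)
    (qk : Fin p → Matrix (Fin n) (Fin n) ℂ)
    (hq : ∀ A, q A = ∑ k, qk k * A * (qk k)ᴴ)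
    (hq_unital : ∑ k, qk k * (qk k)ᴴ = 1)
    (hq_tp : ∑ k, (qk k)ᴴ * qk k = 1)
    (α : Matrix (Fin n × Fin m) (Fin n × Fin m) ℂ ≃ₐ[ℂ]
         Matrix (Fin n × Fin m) (Fin n × Fin m) ℂ)
    (hα_star : ∀ X, α Xᴴ = (α X)ᴴ)
    (hdil : ∀ (k : ℕ), 1 ≤ k → ∀ (A : Matrix (Fin n) (Fin n) ℂ) (a b : Fin n),
      (q^[k] A) a b
        = (1 / (m : ℂ)) * ∑ j : Fin m,
            ((⇑α)^[k] (A ⊗ₖ (1 : Matrix (Fin m) (Fin m) ℂ))) (a, j) (b, j)) :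
    Function.Bijective q ∧ ∀ A B, q (A * B) = q A * q B := by
  classical
  have hmR : (0:ℝ) < m := by exact_mod_cast Nat.pos_of_ne_zero (NeZero.ne m)
  have hm1 : (1:ℝ) ≤ m := by exact_mod_cast Nat.one_le_iff_ne_zero.mpr (NeZero.ne m)
  haveI : Nonempty (Fin n) := ⟨⟨0, Nat.pos_of_ne_zero (NeZero.ne n)⟩⟩
  haveI : Nonempty (Fin m) := ⟨⟨0, Nat.pos_of_ne_zero (NeZero.ne m)⟩⟩
  have hdil' : ∀ k, 1 ≤ k → ∀ A, q^[k] A = ptr ((⇑α)^[k] (emb m A)) := by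
    intro k hk A
    ext a b
    rw [hdil k hk A a b]; rfl
  have htr : ∀ Z, Matrix.trace (α Z) = Matrix.trace Z := fun Z => trace_algEquiv α Z
  have hαn : ∀ X, ‖TM (α X)‖ = ‖TM X‖ := by
    intro X
    refine norm_eq_of_sq_eq ?_ (norm_nonneg _) (norm_nonneg _)
    rw [TM_norm_sq_trace, TM_norm_sq_trace, ← hα_star, ← map_mul α, htr]
  have hαit : ∀ (k) (X), ‖TM ((⇑α)^[k] X)‖ = ‖TM X‖ := by
    intro k
    induction k with
    | zero => intro X; rfl
    | succ k ih => intro X; rw [Function.iterate_succ_apply', hαn, ih]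
  have hαsub : ∀ (k) (X Y), (⇑α)^[k] (X - Y) = (⇑α)^[k] X - (⇑α)^[k] Y := by
    intro k
    induction k with
    | zero => intro X Y; rfl
    | succ k ih =>
        intro X Y
        rw [Function.iterate_succ_apply', Function.iterate_succ_apply',
          Function.iterate_succ_apply', ih, map_sub]
  have hptr_le : ∀ Y : Matrix (Fin n × Fin m) (Fin n × Fin m) ℂ, ‖TM (ptr Y)‖ ^ 2 * m ≤ ‖TM Y‖ ^ 2 := by
    intro Y
    have h := pyth (n := n) (m := m) Y
    nlinarith [sq_nonneg ‖TM Y - TM (emb m (ptr Y))‖]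
  have hcontr : ∀ (k) (A), ‖TM (q^[k] A)‖ ≤ ‖TM A‖ := by
    intro k A
    rcases Nat.eq_zero_or_pos k with h0 | h1
    · subst h0; exact le_refl _
    · rw [hdil' k h1 A]
      refine le_of_sq_le_sq ?_ (norm_nonneg _) (norm_nonneg _)
      have h2 := hptr_le ((⇑α)^[k] (emb m A))
      have h3 : ‖TM ((⇑α)^[k] (emb m A))‖ ^ 2 = m * ‖TM A‖ ^ 2 := by
        rw [hαit, emb_norm_sq]
      nlinarith
  have hrec : ∀ (X) (ε : ℝ), 0 < ε → ∃ k, 1 ≤ k ∧ ‖TM ((⇑α)^[k] X) - TM X‖ < ε := by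
    intro X ε hε
    set u : ℕ → EuclideanSpace ℂ ((Fin n × Fin m) × (Fin n × Fin m)) :=
      fun k => TM ((⇑α)^[k] X) with hu
    have hub : ∀ k, u k ∈ Metric.closedBall (0 : EuclideanSpace ℂ _) ‖TM X‖ := by
      intro k
      rw [Metric.mem_closedBall, dist_zero_right]
      exact le_of_eq (hαit k X)
    obtain ⟨b, -, φ, hφ, hconv⟩ := tendsto_subseq_of_bounded Metric.isBounded_closedBall hub
    rw [Metric.tendsto_atTop] at hconv
    obtain ⟨N, hN⟩ := hconv (ε/2) (by linarith)
    have h1 : dist (u (φ N)) b < ε/2 := hN N le_rfl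
    have h2 : dist (u (φ (N+1))) b < ε/2 := hN (N+1) (Nat.le_succ N)
    have hlt : dist (u (φ (N+1))) (u (φ N)) < ε := by
      calc dist (u (φ (N+1))) (u (φ N)) ≤ dist (u (φ (N+1))) b + dist (u (φ N)) b :=
            dist_triangle_right _ _ _
        _ < ε := by linarith
    have hklt : φ N < φ (N+1) := hφ (Nat.lt_succ_self N)
    refine ⟨φ (N+1) - φ N, by omega, ?_⟩
    have hadd : φ N + (φ (N+1) - φ N) = φ (N+1) := by omega
    have e1 : ‖TM ((⇑α)^[φ (N+1) - φ N] X) - TM X‖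
        = ‖TM ((⇑α)^[φ N] ((⇑α)^[φ (N+1) - φ N] X - X))‖ := by
      rw [← TM_sub, hαit]
    have e2 : (⇑α)^[φ N] ((⇑α)^[φ (N+1) - φ N] X - X)
        = (⇑α)^[φ (N+1)] X - (⇑α)^[φ N] X := by
      rw [hαsub, ← Function.iterate_add_apply, hadd]
    rw [e1, e2, TM_sub, ← dist_eq_norm]
    exact hlt
  have hiso : ∀ A, ‖TM (q A)‖ = ‖TM A‖ := by
    intro A
    refine le_antisymm ?_ ?_
    · have h := hcontr 1 A; rwa [Function.iterate_one] at h
    · refine le_of_forall_pos_le_add ?_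
      intro ε hε
      obtain ⟨k, hk1, hlt⟩ := hrec (emb m A) ε hε
      have hD : q^[k] A - A = ptr ((⇑α)^[k] (emb m A) - emb m A) := by
        rw [ptr_sub, ptr_emb, hdil' k hk1 A]
      have hble : ‖TM (q^[k] A - A)‖ ≤ ‖TM ((⇑α)^[k] (emb m A) - emb m A)‖ := by
        rw [hD]
        refine le_of_sq_le_sq ?_ (norm_nonneg _) (norm_nonneg _)
        have h := hptr_le ((⇑α)^[k] (emb m A) - emb m A)
        nlinarith [sq_nonneg ‖TM (ptr ((⇑α)^[k] (emb m A) - emb m A))‖, hm1]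
      have h5 : ‖TM (q^[k] A) - TM A‖ < ε := by
        rw [← TM_sub]
        calc ‖TM (q^[k] A - A)‖ ≤ ‖TM ((⇑α)^[k] (emb m A) - emb m A)‖ := hble
          _ = ‖TM ((⇑α)^[k] (emb m A)) - TM (emb m A)‖ := by rw [TM_sub]
          _ < ε := hlt
      obtain ⟨k', rfl⟩ : ∃ k', k = k' + 1 := ⟨k - 1, by omega⟩
      have h6 : ‖TM (q^[k' + 1] A)‖ ≤ ‖TM (q A)‖ := by
        rw [Function.iterate_succ_apply]
        exact hcontr k' (q A)
      have h7 : ‖TM A‖ - ‖TM (q^[k' + 1] A)‖ ≤ ‖TM (q^[k' + 1] A) - TM A‖ := by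
        rw [norm_sub_rev]
        exact norm_sub_norm_le _ _
      linarith
  have hfix : ∀ A, α (emb m A) = emb m (q A) := by
    intro A
    have hq1 : ptr (α (emb m A)) = q A := by
      have h := hdil' 1 le_rfl A
      rw [Function.iterate_one, Function.iterate_one] at h
      exact h.symm
    have hp := pyth (α (emb m A))
    rw [hq1] at hp
    have hnorm : ‖TM (α (emb m A))‖ ^ 2 = m * ‖TM (q A)‖ ^ 2 := by
      rw [hαn, emb_norm_sq, hiso]
    have hz : ‖TM (α (emb m A)) - TM (emb m (q A))‖ ^ 2 = 0 := by linarith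
    have hz2 : TM (α (emb m A)) - TM (emb m (q A)) = 0 :=
      norm_eq_zero.mp ((pow_eq_zero_iff two_ne_zero).mp hz)
    exact TM_inj (sub_eq_zero.mp hz2)
  let qlin : Matrix (Fin n) (Fin n) ℂ →ₗ[ℂ] Matrix (Fin n) (Fin n) ℂ :=
    { toFun := q
      map_add' := by intro A B; simp [hq, mul_add, add_mul, Finset.sum_add_distrib]
      map_smul' := by intro c A; simp [hq, Finset.smul_sum, Matrix.mul_smul, Matrix.smul_mul] }
  have hqsub : ∀ A B, q (A - B) = q A - q B := fun A B => map_sub qlin A B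
  have hinj : Function.Injective q := by
    intro A B hAB
    have h1 : q (A - B) = 0 := by rw [hqsub, hAB, sub_self]
    have h2 : ‖TM (A - B)‖ = 0 := by rw [← hiso, h1, TM_zero, norm_zero]
    have h4 : A - B = 0 := TM_inj (by rw [norm_eq_zero.mp h2, TM_zero])
    exact sub_eq_zero.mp h4
  have hsurj : Function.Surjective q := by
    have h : Function.Injective qlin := hinj
    exact LinearMap.injective_iff_surjective.mp h
  refine ⟨⟨hinj, hsurj⟩, ?_⟩
  intro A B
  have hmul : ∀ X Y : Matrix (Fin n) (Fin n) ℂ, emb m (X * Y) = emb m X * emb m Y := by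
    intro X Y
    simp only [emb]
    rw [← Matrix.mul_kronecker_mul, Matrix.one_mul]
  have hembinj : Function.Injective (emb (n := n) m) := by
    intro X Y hXY
    ext a b
    have h := congrFun (congrFun hXY (a, Classical.arbitrary (Fin m))) (b, Classical.arbitrary (Fin m))
    simpa [emb_apply] using h
  apply hembinj
  calc emb m (q (A * B)) = α (emb m (A * B)) := (hfix _).symm
    _ = α (emb m A * emb m B) := by rw [hmul]
    _ = α (emb m A) * α (emb m B) := map_mul α _ _
    _ = emb m (q A) * emb m (q B) := by rw [hfix, hfix]
    _ = emb m (q A * q B) := (hmul _ _).symm
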